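/- Let C and D be categories with D idempotent complete. Let U : D ⥤ C and F : C ⥤ D be functors, and let η : 𝟭_C ⟶ F ⋙ U and ε : U ⋙ F ⟶ 𝟭_D be natural transformations satisfying the single triangle identity on U: for every object d of D, the composite U d ⟶ U (F (U d)) ⟶ U d of η at U d followed by U applied to ε at d is the identity of U d. Then U admits a left adjoint L : C ⥤ D, and for every object x of C the object L x is a retract of F x in D. -/
import Mathlib


open CategoryTheory

universe v₁ v₂ u₁ u₂

/-- The formal 1-categorical core of the proof of Corollary 3.4 (cor:exist): given functors
`U : D ⥤ C`, `F : C ⥤ D` with `D` idempotent complete, a "unit" `η : 𝟭 C ⟶ F ⋙ U` and a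
"counit" `ε : U ⋙ F ⟶ 𝟭 D` satisfying the single triangle identity on `U`, the functor `U`
admits a left adjoint `L` whose value `L x` is a retract of `F x` for every `x`. -/
theorem stmt6 {C : Type u₁} {D : Type u₂} [Category.{v₁} C] [Category.{v₂} D]
    [IsIdempotentComplete D]
    (U : D ⥤ C) (F : C ⥤ D)
    (η : 𝟭 C ⟶ F ⋙ U) (ε : U ⋙ F ⟶ 𝟭 D)
    (triangle : ∀ d : D, η.app (U.obj d) ≫ U.map (ε.app d) = 𝟙 (U.obj d)) :
    ∃ L : C ⥤ D, Nonempty (L ⊣ U) ∧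
      ∀ x : C, ∃ (s : L.obj x ⟶ F.obj x) (r : F.obj x ⟶ L.obj x), s ≫ r = 𝟙 (L.obj x) := by
  set e : ∀ x : C, F.obj x ⟶ F.obj x := fun x => F.map (η.app x) ≫ ε.app (F.obj x) with he
  have εnat : ∀ {d d' : D} (f : d ⟶ d'), F.map (U.map f) ≫ ε.app d' = ε.app d ≫ f := by
    intro d d' f; simpa using ε.naturality f
  have ηnat : ∀ {a b : C} (g : a ⟶ b), g ≫ η.app b = η.app a ≫ U.map (F.map g) := by
    intro a b g; simpa using η.naturality g
  have key : ∀ (x : C) (d : D) (g : x ⟶ U.obj d),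
      e x ≫ F.map g ≫ ε.app d = F.map g ≫ ε.app d := by
    intro x d g
    have h1 : ε.app (F.obj x) ≫ F.map g
        = F.map (U.map (F.map g)) ≫ ε.app (F.obj (U.obj d)) := (εnat (F.map g)).symm
    have h2 : ε.app (F.obj (U.obj d)) ≫ ε.app d
        = F.map (U.map (ε.app d)) ≫ ε.app d := (εnat (ε.app d)).symm
    calc (F.map (η.app x) ≫ ε.app (F.obj x)) ≫ F.map g ≫ ε.app d
        = F.map (η.app x) ≫ (ε.app (F.obj x) ≫ F.map g) ≫ ε.app d := by
          simp only [Category.assoc]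
      _ = F.map (η.app x) ≫ F.map (U.map (F.map g))
            ≫ ε.app (F.obj (U.obj d)) ≫ ε.app d := by
          rw [h1]; simp only [Category.assoc]
      _ = F.map (η.app x ≫ U.map (F.map g)) ≫ F.map (U.map (ε.app d)) ≫ ε.app d := by
          rw [h2]; simp
      _ = F.map (g ≫ η.app (U.obj d)) ≫ F.map (U.map (ε.app d)) ≫ ε.app d := by
          rw [← ηnat g]
      _ = F.map g ≫ F.map (η.app (U.obj d) ≫ U.map (ε.app d)) ≫ ε.app d := by simp
      _ = F.map g ≫ ε.app d := by rw [triangle]; simp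
  have eidem : ∀ x, e x ≫ e x = e x := fun x => key x (F.obj x) (η.app x)
  choose Y s r hsr hrs using fun x => IsIdempotentComplete.idempotents_split
    (F.obj x) (e x) (eidem x)
  have enat : ∀ {x y : C} (f : x ⟶ y), F.map f ≫ e y = e x ≫ F.map f := by
    intro x y f
    rw [he]
    have h1 : F.map f ≫ F.map (η.app y) = F.map (η.app x) ≫ F.map (U.map (F.map f)) := by
      rw [← F.map_comp, ← F.map_comp, ηnat f]
    rw [← Category.assoc, h1, Category.assoc, εnat (F.map f), Category.assoc]
  have her : ∀ w, e w ≫ r w = r w := fun w => by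
    rw [← hrs w, Category.assoc, hsr w, Category.comp_id]
  let L : C ⥤ D :=
    { obj := Y
      map := fun {x y} f => s x ≫ F.map f ≫ r y
      map_id := fun x => by simp only [F.map_id, Category.id_comp, hsr]
      map_comp := fun {x y z} f g => by
        have h1 : r y ≫ s y ≫ F.map g ≫ r z = F.map g ≫ r z := by
          rw [← Category.assoc, hrs y, ← Category.assoc, ← enat g, Category.assoc, her z]
        simp only [F.map_comp, Category.assoc, h1] }
  refine ⟨L, ⟨Adjunction.mkOfHomEquiv
    { homEquiv := fun x d =>
        { toFun := fun g => η.app x ≫ U.map (r x ≫ g)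
          invFun := fun f => s x ≫ F.map f ≫ ε.app d
          left_inv := ?_
          right_inv := ?_ }
      homEquiv_naturality_left_symm := ?_
      homEquiv_naturality_right := ?_ }⟩, fun x => ⟨s x, r x, hsr x⟩⟩
  · intro g
    simp only [U.map_comp, F.map_comp]
    have h1 : F.map (U.map (r x ≫ g)) ≫ ε.app d = ε.app (F.obj x) ≫ r x ≫ g :=
      εnat (r x ≫ g)
    simp only [U.map_comp, F.map_comp, Category.assoc] at h1 ⊢
    rw [h1, ← Category.assoc (F.map (η.app x))]
    show s x ≫ e x ≫ r x ≫ g = g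
    rw [← Category.assoc (e x), her x, ← Category.assoc, hsr x, Category.id_comp]
  · intro f
    simp only [Category.assoc]
    rw [← Category.assoc (r x), hrs x, key x d f]
    rw [U.map_comp, ← Category.assoc, ← ηnat f, Category.assoc, triangle,
      Category.comp_id]
  · intro x' x d f g
    show s x' ≫ F.map (f ≫ g) ≫ ε.app d
        = (s x' ≫ F.map f ≫ r x) ≫ s x ≫ F.map g ≫ ε.app d
    have h1 : r x ≫ s x ≫ F.map g ≫ ε.app d = F.map g ≫ ε.app d := by
      rw [← Category.assoc, hrs x, key x d g]
    simp only [F.map_comp, Category.assoc, h1]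
  · intro x d d' f g
    show η.app x ≫ U.map (r x ≫ f ≫ g) = (η.app x ≫ U.map (r x ≫ f)) ≫ U.map g
    simp only [U.map_comp, Category.assoc]
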